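/- With the Brenner construction F : Mod A → Mod k⟨X,Y⟩ defined by FM = M^{n+2} with the shift-type actions of X and Y, every k⟨X,Y⟩-submodule U of FM equals (M')^{n+2} = FM' for the A-submodule M' = π_1(U), where π_1 is projection to the first coordinate. In particular F induces an isomorphism between the lattice of A-submodules of M and the lattice of k⟨X,Y⟩-submodules of FM, and F preserves composition length. -/

import Mathlib

namespace BrennerAux

variable {k M : Type} [Field k] [AddCommGroup M] [Module k M] {n : ℕ}

lemma xstep (x : Fin (n+2) → Fin (n+2) → (M →ₗ[k] M))
    (hxsub : ∀ i j : Fin (n + 2), (i : ℕ) = (j : ℕ) + 1 → x i j = LinearMap.id)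
    (hxupper : ∀ i j : Fin (n + 2), (i : ℕ) ≤ (j : ℕ) → x i j = 0)
    (b b' : Fin (n+2)) (hb : (b' : ℕ) = (b : ℕ) + 1)
    (u : Fin (n+2) → M) (hu : ∀ j : Fin (n+2), (j:ℕ) < (b:ℕ) → u j = 0) :
    (∀ j : Fin (n+2), (j:ℕ) < (b':ℕ) → (∑ l, x j l (u l)) = 0) ∧
      (∑ l, x b' l (u l)) = u b := by
  constructor
  · intro j hj
    refine Finset.sum_eq_zero fun l _ => ?_
    rcases le_or_gt (j:ℕ) (l:ℕ) with h | h
    · rw [hxupper j l h]; simp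
    · rw [hu l (by omega)]; simp
  · rw [Finset.sum_eq_single b]
    · rw [hxsub b' b hb]; rfl
    · intro l _ hl
      have hl' : (l:ℕ) ≠ (b:ℕ) := fun h => hl (Fin.ext h)
      rcases le_or_gt (b':ℕ) (l:ℕ) with h | h
      · rw [hxupper b' l h]; simp
      · rw [hu l (by omega)]; simp
    · intro h; exact absurd (Finset.mem_univ b) h

lemma ystep (y : Fin (n+2) → Fin (n+2) → (M →ₗ[k] M))
    (hysup : ∀ i j : Fin (n + 2), (j : ℕ) = (i : ℕ) + 1 → y i j = LinearMap.id)
    (hylower : ∀ i j : Fin (n + 2), (j : ℕ) ≤ (i : ℕ) → y i j = 0)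
    (t t' : Fin (n+2)) (ht : (t : ℕ) = (t' : ℕ) + 1)
    (u : Fin (n+2) → M) (hu : ∀ j : Fin (n+2), (t:ℕ) < (j:ℕ) → u j = 0) :
    (∀ j : Fin (n+2), (t':ℕ) < (j:ℕ) → (∑ l, y j l (u l)) = 0) ∧
      (∑ l, y t' l (u l)) = u t := by
  constructor
  · intro j hj
    refine Finset.sum_eq_zero fun l _ => ?_
    rcases le_or_gt (l:ℕ) (j:ℕ) with h | h
    · rw [hylower j l h]; simp
    · rw [hu l (by omega)]; simp
  · rw [Finset.sum_eq_single t]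
    · rw [hysup t' t ht]; rfl
    · intro l _ hl
      have hl' : (l:ℕ) ≠ (t:ℕ) := fun h => hl (Fin.ext h)
      rcases le_or_gt (l:ℕ) (t':ℕ) with h | h
      · rw [hylower t' l h]; simp
      · rw [hu l (by omega)]; simp
    · intro h; exact absurd (Finset.mem_univ t) h

/-- Extraction of the top coordinate into position 0 (apply `Y` repeatedly). -/
lemma plemma (y : Fin (n+2) → Fin (n+2) → (M →ₗ[k] M))
    (hysup : ∀ i j : Fin (n + 2), (j : ℕ) = (i : ℕ) + 1 → y i j = LinearMap.id)
    (hylower : ∀ i j : Fin (n + 2), (j : ℕ) ≤ (i : ℕ) → y i j = 0)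
    (U : Submodule k (Fin (n+2) → M))
    (hYU : ∀ u ∈ U, (fun i => ∑ j, y i j (u j)) ∈ U) :
    ∀ (c : ℕ) (t : Fin (n+2)), (t:ℕ) = c → ∀ u ∈ U,
      (∀ j : Fin (n+2), (t:ℕ) < (j:ℕ) → u j = 0) →
      Pi.single (0 : Fin (n+2)) (u t) ∈ U := by
  intro c
  induction c with
  | zero =>
    intro t ht u hu hvan
    have ht0 : t = 0 := Fin.ext (by simpa using ht)
    subst ht0
    have : u = Pi.single (0 : Fin (n+2)) (u 0) := by
      funext j
      by_cases hj : j = 0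
      · subst hj; simp
      · rw [hvan j (by have : (j:ℕ) ≠ 0 := fun h => hj (Fin.ext (by simpa using h)); omega),
          Pi.single_eq_of_ne hj]
    rw [← this]; exact hu
  | succ c ih =>
    intro t ht u hu hvan
    have hc : c < n + 2 := by have := t.isLt; omega
    set t' : Fin (n+2) := ⟨c, hc⟩ with ht'
    have hstep := ystep y hysup hylower t t' (by simp [ht']; omega) u hvan
    have hw : (fun i => ∑ l, y i l (u l)) ∈ U := hYU u hu
    have hres := ih t' rfl _ hw (fun j hj => hstep.1 j hj)
    simpa [hstep.2] using hres

/-- Extraction of the bottom coordinate into the top position (apply `X` repeatedly). -/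
lemma qlemma (x : Fin (n+2) → Fin (n+2) → (M →ₗ[k] M))
    (hxsub : ∀ i j : Fin (n + 2), (i : ℕ) = (j : ℕ) + 1 → x i j = LinearMap.id)
    (hxupper : ∀ i j : Fin (n + 2), (i : ℕ) ≤ (j : ℕ) → x i j = 0)
    (U : Submodule k (Fin (n+2) → M))
    (hXU : ∀ u ∈ U, (fun i => ∑ j, x i j (u j)) ∈ U) :
    ∀ (c : ℕ) (b : Fin (n+2)), (b:ℕ) + c = n + 1 → ∀ u ∈ U,
      (∀ j : Fin (n+2), (j:ℕ) < (b:ℕ) → u j = 0) →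
      Pi.single (Fin.last (n+1)) (u b) ∈ U := by
  intro c
  induction c with
  | zero =>
    intro b hb u hu hvan
    have hb0 : b = Fin.last (n+1) := Fin.ext (by simpa using hb)
    subst hb0
    have : u = Pi.single (Fin.last (n+1)) (u (Fin.last (n+1))) := by
      funext j
      by_cases hj : j = Fin.last (n+1)
      · subst hj; simp
      · rw [hvan j (by
          have h1 : (j:ℕ) ≠ n+1 := fun h => hj (Fin.ext (by simpa using h))
          have := j.isLt
          simpa using by omega), Pi.single_eq_of_ne hj]
    rw [← this]; exact hu
  | succ c ih =>
    intro b hb u hu hvan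
    have hb' : (b:ℕ) + 1 < n + 2 := by omega
    set b' : Fin (n+2) := ⟨(b:ℕ)+1, hb'⟩ with hb'def
    have hstep := xstep x hxsub hxupper b b' rfl u hvan
    have hw : (fun i => ∑ l, x i l (u l)) ∈ U := hXU u hu
    have hres := ih b' (by simp [hb'def]; omega) _ hw (fun j hj => hstep.1 j hj)
    simpa [hstep.2] using hres

/-- Climb: from `Pi.single 0 m ∈ U` produce an element of `U` vanishing below `i`
with `i`-th coordinate `m`. -/
lemma climb (x : Fin (n+2) → Fin (n+2) → (M →ₗ[k] M))
    (hxsub : ∀ i j : Fin (n + 2), (i : ℕ) = (j : ℕ) + 1 → x i j = LinearMap.id)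
    (hxupper : ∀ i j : Fin (n + 2), (i : ℕ) ≤ (j : ℕ) → x i j = 0)
    (U : Submodule k (Fin (n+2) → M))
    (hXU : ∀ u ∈ U, (fun i => ∑ j, x i j (u j)) ∈ U) :
    ∀ (c : ℕ) (i : Fin (n+2)), (i:ℕ) = c → ∀ m : M,
      Pi.single (0 : Fin (n+2)) m ∈ U →
      ∃ u ∈ U, (∀ j : Fin (n+2), (j:ℕ) < (i:ℕ) → u j = 0) ∧ u i = m := by
  intro c
  induction c with
  | zero =>
    intro i hi m hm
    have hi0 : i = 0 := Fin.ext (by simpa using hi)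
    subst hi0
    exact ⟨Pi.single 0 m, hm, fun j hj => by omega, by simp⟩
  | succ c ih =>
    intro i hi m hm
    have hc : c < n + 2 := by have := i.isLt; omega
    set i' : Fin (n+2) := ⟨c, hc⟩ with hi'
    obtain ⟨u, hu, hvan, hui⟩ := ih i' rfl m hm
    have hstep := xstep x hxsub hxupper i' i (by simp [hi']; omega) u hvan
    refine ⟨_, hXU u hu, fun j hj => hstep.1 j hj, ?_⟩
    rw [hstep.2, hui]


/-- Cleaning: an element of `U` supported in `[i, i+c]` with `i`-th coordinate `m`
yields `Pi.single i m ∈ U`, assuming singles at higher indices are available. -/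
lemma clean (x y : Fin (n+2) → Fin (n+2) → (M →ₗ[k] M))
    (hysup : ∀ i j : Fin (n + 2), (j : ℕ) = (i : ℕ) + 1 → y i j = LinearMap.id)
    (hylower : ∀ i j : Fin (n + 2), (j : ℕ) ≤ (i : ℕ) → y i j = 0)
    (U : Submodule k (Fin (n+2) → M))
    (hYU : ∀ u ∈ U, (fun i => ∑ j, y i j (u j)) ∈ U)
    (i : Fin (n+2)) (m : M)
    (hS : ∀ l : Fin (n+2), (i:ℕ) < (l:ℕ) → ∀ m' : M,
        Pi.single (0 : Fin (n+2)) m' ∈ U → Pi.single l m' ∈ U) :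
    ∀ (c : ℕ) (w : Fin (n+2) → M), w ∈ U →
      (∀ j : Fin (n+2), (j:ℕ) < (i:ℕ) → w j = 0) →
      (∀ j : Fin (n+2), (i:ℕ) + c < (j:ℕ) → w j = 0) →
      w i = m → Pi.single i m ∈ U := by
  intro c
  induction c with
  | zero =>
    intro w hw hlow hhigh hwi
    have : w = Pi.single i m := by
      funext j
      by_cases hj : j = i
      · subst hj; simpa using hwi
      · have hj' : (j:ℕ) ≠ (i:ℕ) := fun h => hj (Fin.ext h)
        rw [Pi.single_eq_of_ne hj]
        rcases lt_or_gt_of_ne hj' with h | h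
        · exact hlow j h
        · exact hhigh j (by omega)
    rw [← this]; exact hw
  | succ c ih =>
    intro w hw hlow hhigh hwi
    by_cases h : (i:ℕ) + c + 1 ≤ n + 1
    · set t : Fin (n+2) := ⟨(i:ℕ) + c + 1, by omega⟩ with htdef
      have hwt : Pi.single (0 : Fin (n+2)) (w t) ∈ U :=
        plemma y hysup hylower U hYU ((i:ℕ)+c+1) t rfl w hw
          (fun j hj => hhigh j (by simp [htdef] at hj; omega))
      have hsing : Pi.single t (w t) ∈ U := hS t (by simp [htdef]) _ hwt
      have hw' : w - Pi.single t (w t) ∈ U := U.sub_mem hw hsing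
      refine ih (w - Pi.single t (w t)) hw' (fun j hj => ?_) (fun j hj => ?_) ?_
      · have hjt : j ≠ t := fun hh => by rw [hh] at hj; simp [htdef] at hj; omega
        simp [Pi.sub_apply, hlow j hj, Pi.single_eq_of_ne hjt]
      · by_cases hjt : j = t
        · subst hjt; simp
        · have hj' : (j:ℕ) ≠ (t:ℕ) := fun hh => hjt (Fin.ext hh)
          have : (i:ℕ) + (c+1) < (j:ℕ) := by simp [htdef] at hj' ⊢; omega
          simp [Pi.sub_apply, hhigh j this, Pi.single_eq_of_ne hjt]
      · have hit : i ≠ t := fun hh => by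
          have := congrArg Fin.val hh; simp [htdef] at this; omega
        simp [Pi.sub_apply, Pi.single_eq_of_ne hit, hwi]
    · exact ih w hw hlow (fun j hj => (by have := j.isLt; omega : False).elim) hwi

/-- Main lemma: singles can be moved to any position. -/
lemma mainS (x y : Fin (n+2) → Fin (n+2) → (M →ₗ[k] M))
    (hxsub : ∀ i j : Fin (n + 2), (i : ℕ) = (j : ℕ) + 1 → x i j = LinearMap.id)
    (hxupper : ∀ i j : Fin (n + 2), (i : ℕ) ≤ (j : ℕ) → x i j = 0)
    (hysup : ∀ i j : Fin (n + 2), (j : ℕ) = (i : ℕ) + 1 → y i j = LinearMap.id)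
    (hylower : ∀ i j : Fin (n + 2), (j : ℕ) ≤ (i : ℕ) → y i j = 0)
    (U : Submodule k (Fin (n+2) → M))
    (hXU : ∀ u ∈ U, (fun i => ∑ j, x i j (u j)) ∈ U)
    (hYU : ∀ u ∈ U, (fun i => ∑ j, y i j (u j)) ∈ U) :
    ∀ (d : ℕ) (i : Fin (n+2)), n + 1 ≤ (i:ℕ) + d → ∀ m : M,
      Pi.single (0 : Fin (n+2)) m ∈ U → Pi.single i m ∈ U := by
  intro d
  induction d with
  | zero =>
    intro i hi m hm
    have hilast : i = Fin.last (n+1) := Fin.ext (by have := i.isLt; simp; omega)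
    subst hilast
    have := qlemma x hxsub hxupper U hXU (n+1) 0 (by simp) (Pi.single 0 m) hm
      (fun j hj => by simp at hj)
    simpa using this
  | succ d ih =>
    intro i hi m hm
    by_cases h : n + 1 ≤ (i:ℕ) + d
    · exact ih i h m hm
    · have hS : ∀ l : Fin (n+2), (i:ℕ) < (l:ℕ) → ∀ m' : M,
          Pi.single (0 : Fin (n+2)) m' ∈ U → Pi.single l m' ∈ U :=
        fun l hl m' hm' => ih l (by omega) m' hm'
      obtain ⟨u, hu, hvan, hui⟩ := climb x hxsub hxupper U hXU (i:ℕ) i rfl m hm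
      exact clean x y hysup hylower U hYU i m hS (n+1) u hu hvan
        (fun j hj => (by have := j.isLt; omega : False).elim) hui

/-- Every coordinate of an element of `U` gives a `Pi.single 0` element of `U`. -/
lemma coordsN (x y : Fin (n+2) → Fin (n+2) → (M →ₗ[k] M))
    (hxsub : ∀ i j : Fin (n + 2), (i : ℕ) = (j : ℕ) + 1 → x i j = LinearMap.id)
    (hxupper : ∀ i j : Fin (n + 2), (i : ℕ) ≤ (j : ℕ) → x i j = 0)
    (hysup : ∀ i j : Fin (n + 2), (j : ℕ) = (i : ℕ) + 1 → y i j = LinearMap.id)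
    (hylower : ∀ i j : Fin (n + 2), (j : ℕ) ≤ (i : ℕ) → y i j = 0)
    (U : Submodule k (Fin (n+2) → M))
    (hXU : ∀ u ∈ U, (fun i => ∑ j, x i j (u j)) ∈ U)
    (hYU : ∀ u ∈ U, (fun i => ∑ j, y i j (u j)) ∈ U) :
    ∀ (c : ℕ) (u : Fin (n+2) → M), u ∈ U →
      (∀ j : Fin (n+2), c < (j:ℕ) → u j = 0) →
      ∀ i : Fin (n+2), Pi.single (0 : Fin (n+2)) (u i) ∈ U := by
  intro c
  induction c with
  | zero =>
    intro u hu hvan i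
    by_cases hi : i = 0
    · subst hi
      have : u = Pi.single (0 : Fin (n+2)) (u 0) := by
        funext j
        by_cases hj : j = 0
        · subst hj; simp
        · rw [hvan j (by have : (j:ℕ) ≠ 0 := fun h => hj (Fin.ext (by simpa using h)); omega),
            Pi.single_eq_of_ne hj]
      rw [← this]; exact hu
    · rw [hvan i (by have : (i:ℕ) ≠ 0 := fun h => hi (Fin.ext (by simpa using h)); omega)]
      simpa using U.zero_mem
  | succ c ih =>
    intro u hu hvan i
    by_cases h : c + 1 ≤ n + 1
    · set t : Fin (n+2) := ⟨c+1, by omega⟩ with htdef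
      have h1 : Pi.single (0 : Fin (n+2)) (u t) ∈ U :=
        plemma y hysup hylower U hYU (c+1) t rfl u hu
          (fun j hj => hvan j (by simpa [htdef] using hj))
      have h2 : Pi.single t (u t) ∈ U :=
        mainS x y hxsub hxupper hysup hylower U hXU hYU (n+1) t (by omega) _ h1
      have hu' : u - Pi.single t (u t) ∈ U := U.sub_mem hu h2
      have hvan' : ∀ j : Fin (n+2), c < (j:ℕ) → (u - Pi.single t (u t) : Fin (n+2) → M) j = 0 := by
        intro j hj
        by_cases hjt : j = t
        · subst hjt; simp
        · have hj' : (j:ℕ) ≠ (t:ℕ) := fun hh => hjt (Fin.ext hh)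
          have : c + 1 < (j:ℕ) := by simp [htdef] at hj'; omega
          simp [Pi.sub_apply, hvan j this, Pi.single_eq_of_ne hjt]
      have hres := ih (u - Pi.single t (u t)) hu' hvan' i
      by_cases hit : i = t
      · subst hit; exact h1
      · have : (u - Pi.single t (u t) : Fin (n+2) → M) i = u i := by
          simp [Pi.sub_apply, Pi.single_eq_of_ne hit]
        rwa [this] at hres
    · exact ih u hu (fun j hj => (by have := j.isLt; omega : False).elim) i

end BrennerAux


open BrennerAux in


/-- Brenner's construction: let `A` be the free algebra on the
variables `x_{ij}, y_{ij}`, realized here as a `k`-vector space `M` with two families of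
endomorphisms `x i j`, `y i j`.  On `FM = M^{n+2}` let `X` act by the strictly lower
triangular block matrix with identity blocks on the subdiagonal and the `x i j` below,
and `Y` by the transposed-shape upper triangular block matrix with the `y i j`.  Then
every `k⟨X,Y⟩`-submodule `U` of `FM` equals `(M')^{n+2}` for the `A`-submodule
`M' = π₁(U)`, and `M' ↦ (M')^{n+2}` is an isomorphism between the lattice of
`A`-submodules of `M` and the lattice of `k⟨X,Y⟩`-submodules of `FM` (in particular `F`
preserves composition length). -/
theorem brenner_submodule_lattice
    (k M : Type) [Field k] [AddCommGroup M] [Module k M] [FiniteDimensional k M]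
    (n : ℕ) (hn : 2 ≤ n)
    (x y : Fin (n + 2) → Fin (n + 2) → (M →ₗ[k] M))
    (hxsub : ∀ i j : Fin (n + 2), (i : ℕ) = (j : ℕ) + 1 → x i j = LinearMap.id)
    (hxupper : ∀ i j : Fin (n + 2), (i : ℕ) ≤ (j : ℕ) → x i j = 0)
    (hysup : ∀ i j : Fin (n + 2), (j : ℕ) = (i : ℕ) + 1 → y i j = LinearMap.id)
    (hylower : ∀ i j : Fin (n + 2), (j : ℕ) ≤ (i : ℕ) → y i j = 0) :
    letI X : Module.End k (Fin (n + 2) → M) :=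
      LinearMap.pi fun i => ∑ j : Fin (n + 2), (x i j) ∘ₗ LinearMap.proj j
    letI Y : Module.End k (Fin (n + 2) → M) :=
      LinearMap.pi fun i => ∑ j : Fin (n + 2), (y i j) ∘ₗ LinearMap.proj j
    -- every (X,Y)-invariant subspace U of M^{n+2} is (M')^{n+2} with M' = π₁ U
    -- an A-submodule of M
    (∀ U : Submodule k (Fin (n + 2) → M),
        (∀ u ∈ U, X u ∈ U) → (∀ u ∈ U, Y u ∈ U) →
        (∀ i j : Fin (n + 2), ∀ m ∈ U.map (LinearMap.proj (0 : Fin (n + 2))),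
            x i j m ∈ U.map (LinearMap.proj (0 : Fin (n + 2))) ∧
            y i j m ∈ U.map (LinearMap.proj (0 : Fin (n + 2)))) ∧
          U = Submodule.pi Set.univ
                (fun _ : Fin (n + 2) => U.map (LinearMap.proj (0 : Fin (n + 2))))) ∧
    -- the lattices of A-submodules of M and of k⟨X,Y⟩-submodules of M^{n+2} are isomorphic
    ∃ e : {N : Submodule k M // ∀ i j : Fin (n + 2), ∀ m ∈ N, x i j m ∈ N ∧ y i j m ∈ N} ≃o
          {U : Submodule k (Fin (n + 2) → M) // (∀ u ∈ U, X u ∈ U) ∧ ∀ u ∈ U, Y u ∈ U},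
      ∀ N, (e N : Submodule k (Fin (n + 2) → M))
            = Submodule.pi Set.univ (fun _ : Fin (n + 2) => (N : Submodule k M)) := by
  classical
  set X : Module.End k (Fin (n + 2) → M) :=
    LinearMap.pi fun i => ∑ j : Fin (n + 2), (x i j) ∘ₗ LinearMap.proj j with hXdef
  set Y : Module.End k (Fin (n + 2) → M) :=
    LinearMap.pi fun i => ∑ j : Fin (n + 2), (y i j) ∘ₗ LinearMap.proj j with hYdef
  have hXapp : ∀ u : Fin (n+2) → M, X u = fun i => ∑ j, x i j (u j) := by
    intro u
    funext i
    show (LinearMap.pi fun i => ∑ j : Fin (n + 2), (x i j) ∘ₗ LinearMap.proj j) u i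
      = ∑ j, x i j (u j)
    simp [LinearMap.pi_apply, LinearMap.sum_apply]
  have hYapp : ∀ u : Fin (n+2) → M, Y u = fun i => ∑ j, y i j (u j) := by
    intro u
    funext i
    show (LinearMap.pi fun i => ∑ j : Fin (n + 2), (y i j) ∘ₗ LinearMap.proj j) u i
      = ∑ j, y i j (u j)
    simp [LinearMap.pi_apply, LinearMap.sum_apply]
  have hXU' : ∀ (U : Submodule k (Fin (n+2) → M)), (∀ u ∈ U, X u ∈ U) →
      ∀ u ∈ U, (fun i => ∑ j, x i j (u j)) ∈ U := by
    intro U hX u hu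
    have := hX u hu
    rwa [hXapp u] at this
  have hYU' : ∀ (U : Submodule k (Fin (n+2) → M)), (∀ u ∈ U, Y u ∈ U) →
      ∀ u ∈ U, (fun i => ∑ j, y i j (u j)) ∈ U := by
    intro U hY u hu
    have := hY u hu
    rwa [hYapp u] at this
  have key : ∀ U : Submodule k (Fin (n + 2) → M),
      (∀ u ∈ U, X u ∈ U) → (∀ u ∈ U, Y u ∈ U) →
      (∀ i j : Fin (n + 2), ∀ m ∈ U.map (LinearMap.proj (0 : Fin (n + 2))),
          x i j m ∈ U.map (LinearMap.proj (0 : Fin (n + 2))) ∧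
          y i j m ∈ U.map (LinearMap.proj (0 : Fin (n + 2)))) ∧
        U = Submodule.pi Set.univ
              (fun _ : Fin (n + 2) => U.map (LinearMap.proj (0 : Fin (n + 2)))) := by
    intro U hXmem hYmem
    have hXU := hXU' U hXmem
    have hYU := hYU' U hYmem
    have hall : ∀ u ∈ U, ∀ i : Fin (n+2), Pi.single (0 : Fin (n+2)) (u i) ∈ U :=
      fun u hu i => coordsN x y hxsub hxupper hysup hylower U hXU hYU (n+1) u hu
        (fun j hj => absurd j.isLt (by omega)) i
    have hNiff : ∀ m : M, m ∈ U.map (LinearMap.proj (0 : Fin (n + 2))) ↔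
        Pi.single (0 : Fin (n+2)) m ∈ U := by
      intro m
      simp only [Submodule.mem_map]
      constructor
      · rintro ⟨u, hu, rfl⟩
        exact hall u hu 0
      · intro h
        exact ⟨Pi.single 0 m, h, by simp⟩
    have hsingleAny : ∀ (i : Fin (n+2)) (m : M),
        Pi.single (0 : Fin (n+2)) m ∈ U → Pi.single i m ∈ U :=
      fun i m hm => mainS x y hxsub hxupper hysup hylower U hXU hYU (n+1) i (by omega) m hm
    constructor
    · intro i j m hm
      have hm0 : Pi.single (0 : Fin (n+2)) m ∈ U := (hNiff m).1 hm
      have hj : Pi.single j m ∈ U := hsingleAny j m hm0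
      constructor
      · have hw : (fun i' => ∑ l, x i' l ((Pi.single j m : Fin (n+2) → M) l)) ∈ U :=
          hXU _ hj
        have hcoord : (∑ l, x i l ((Pi.single j m : Fin (n+2) → M) l)) = x i j m := by
          rw [Finset.sum_eq_single j]
          · simp
          · intro l _ hl; rw [Pi.single_eq_of_ne hl]; simp
          · intro hh; exact absurd (Finset.mem_univ j) hh
        exact (hNiff _).2 (by simpa [hcoord] using hall _ hw i)
      · have hw : (fun i' => ∑ l, y i' l ((Pi.single j m : Fin (n+2) → M) l)) ∈ U :=
          hYU _ hj
        have hcoord : (∑ l, y i l ((Pi.single j m : Fin (n+2) → M) l)) = y i j m := by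
          rw [Finset.sum_eq_single j]
          · simp
          · intro l _ hl; rw [Pi.single_eq_of_ne hl]; simp
          · intro hh; exact absurd (Finset.mem_univ j) hh
        exact (hNiff _).2 (by simpa [hcoord] using hall _ hw i)
    · apply le_antisymm
      · intro u hu
        exact Submodule.mem_pi.2 fun i _ => (hNiff (u i)).2 (hall u hu i)
      · intro u hu
        have hu' := Submodule.mem_pi.1 hu
        have hrep : u = ∑ i, Pi.single i (u i) := (Finset.univ_sum_single u).symm
        rw [hrep]
        exact Submodule.sum_mem U fun i _ =>
          hsingleAny i (u i) ((hNiff (u i)).1 (hu' i trivial))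
  have hpiXY : ∀ (N : Submodule k M),
      (∀ i j : Fin (n+2), ∀ m ∈ N, x i j m ∈ N ∧ y i j m ∈ N) →
      (∀ u ∈ Submodule.pi Set.univ (fun _ : Fin (n+2) => N),
          X u ∈ Submodule.pi Set.univ (fun _ : Fin (n+2) => N)) ∧
      (∀ u ∈ Submodule.pi Set.univ (fun _ : Fin (n+2) => N),
          Y u ∈ Submodule.pi Set.univ (fun _ : Fin (n+2) => N)) := by
    intro N hN
    constructor
    · intro u hu
      rw [hXapp u]
      refine Submodule.mem_pi.2 fun i _ => ?_
      show (∑ j, x i j (u j)) ∈ N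
      exact Submodule.sum_mem N fun j _ =>
        (hN i j (u j) (Submodule.mem_pi.1 hu j trivial)).1
    · intro u hu
      rw [hYapp u]
      refine Submodule.mem_pi.2 fun i _ => ?_
      show (∑ j, y i j (u j)) ∈ N
      exact Submodule.sum_mem N fun j _ =>
        (hN i j (u j) (Submodule.mem_pi.1 hu j trivial)).2
  have hproj : ∀ (N : Submodule k M),
      (Submodule.pi Set.univ (fun _ : Fin (n+2) => N)).map
        (LinearMap.proj (0 : Fin (n + 2))) = N := by
    intro N
    ext m
    simp only [Submodule.mem_map]
    constructor
    · rintro ⟨u, hu, rfl⟩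
      exact Submodule.mem_pi.1 hu 0 trivial
    · intro hm
      exact ⟨fun _ => m, Submodule.mem_pi.2 fun i _ => hm, rfl⟩
  refine ⟨key, ⟨{
      toFun := fun N => ⟨Submodule.pi Set.univ (fun _ : Fin (n+2) => N.1),
        (hpiXY N.1 N.2).1, (hpiXY N.1 N.2).2⟩
      invFun := fun U => ⟨U.1.map (LinearMap.proj (0 : Fin (n + 2))),
        fun i j m hm => (key U.1 U.2.1 U.2.2).1 i j m hm⟩
      left_inv := fun N => Subtype.ext (hproj N.1)
      right_inv := fun U => Subtype.ext ((key U.1 U.2.1 U.2.2).2).symm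
      map_rel_iff' := by
        intro N N'
        constructor
        · intro h
          show (N : Submodule k M) ≤ (N' : Submodule k M)
          intro m hm
          have h1 : (fun _ => m : Fin (n+2) → M) ∈
              Submodule.pi Set.univ (fun _ : Fin (n+2) => (N : Submodule k M)) :=
            Submodule.mem_pi.2 fun i _ => hm
          have h2 := h h1
          exact Submodule.mem_pi.1 h2 0 trivial
        · intro h
          show Submodule.pi Set.univ (fun _ : Fin (n+2) => (N : Submodule k M)) ≤
            Submodule.pi Set.univ (fun _ : Fin (n+2) => (N' : Submodule k M))
          intro u hu
          exact Submodule.mem_pi.2 fun i _ => h (Submodule.mem_pi.1 hu i trivial) },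
    fun N => rfl⟩⟩
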